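/- (Blichfeldt–van der Corput.) For any full-rank lattice Λ ⊂ ℝⁿ with det(Λ) ≤ 1 and any r > 0, the number of lattice points in the closed Euclidean ball of radius r centered at the origin satisfies |Λ ∩ B(r)| ≥ 2^{−n} · vol(B(r)). -/

import Mathlib

open Pointwise MeasureTheory

/-- Blichfeldt–van der Corput: a full-rank lattice of determinant at
most 1 has at least `2⁻ⁿ · vol(B(r))` points in the ball of radius `r`. -/
theorem blichfeldt_van_der_corput (n : ℕ)
    (b : Fin n → EuclideanSpace ℝ (Fin n)) (hb : LinearIndependent ℝ b)
    (hdet : |(Matrix.of (fun i j : Fin n => b j i)).det| ≤ 1)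
    (Λ : Set (EuclideanSpace ℝ (Fin n)))
    (hΛ : Λ = {x | ∃ a : Fin n → ℤ, x = ∑ i, (a i : ℝ) • b i})
    (r : ℝ) (hr : 0 < r) :
    (2 : ℝ)⁻¹ ^ n * (volume (Metric.closedBall (0 : EuclideanSpace ℝ (Fin n)) r)).toReal
      ≤ ((Λ ∩ Metric.closedBall 0 r).ncard : ℝ) := by
  classical
  let b' : Module.Basis (Fin n) ℝ (EuclideanSpace ℝ (Fin n)) :=
    Module.Basis.mk hb (hb.span_eq_top_of_card_eq_finrank' (by simp [finrank_euclideanSpace_fin])).ge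
  have hb' : ⇑b' = b := Module.Basis.coe_mk _ _
  -- Λ is the ℤ-span of b
  have hΛL : Λ = ((Submodule.span ℤ (Set.range ⇑b') :
      Submodule ℤ (EuclideanSpace ℝ (Fin n))) : Set (EuclideanSpace ℝ (Fin n))) := by
    rw [hΛ]
    ext x
    rw [SetLike.mem_coe, hb', Submodule.mem_span_range_iff_exists_fun ℤ]
    constructor
    · rintro ⟨a, rfl⟩
      exact ⟨a, by simp_rw [← Int.cast_smul_eq_zsmul ℝ]⟩
    · rintro ⟨a, rfl⟩
      exact ⟨a, by simp_rw [← Int.cast_smul_eq_zsmul ℝ]⟩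
  let L := (Submodule.span ℤ (Set.range ⇑b')).toAddSubgroup
  have hcnt : Countable (Submodule.span ℤ (Set.range ⇑b')) :=
    Countable.of_equiv _ (Module.Basis.restrictScalars ℤ b').repr.toEquiv.symm
  have hcnt' : Countable L := hcnt
  have hdisc : DiscreteTopology L :=
    inferInstanceAs (DiscreteTopology (Submodule.span ℤ (Set.range ⇑b')))
  have hclosed : IsClosed (L : Set (EuclideanSpace ℝ (Fin n))) :=
    AddSubgroup.isClosed_of_discrete
  -- finiteness of lattice points in the ball
  have hTfin : (Λ ∩ Metric.closedBall 0 r).Finite := by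
    rw [hΛL, Set.inter_comm]
    have hdisc2 : DiscreteTopology
        ((Submodule.span ℤ (Set.range ⇑b') : Set (EuclideanSpace ℝ (Fin n))) : Type _) := hdisc
    exact Metric.finite_isBounded_inter_isClosed DiscreteTopology.isDiscrete Metric.isBounded_closedBall hclosed
  set N := (Λ ∩ Metric.closedBall 0 r).ncard with hN
  -- fundamental domain
  set F := ZSpan.fundamentalDomain b' with hF
  have hFmeas : MeasurableSet F := ZSpan.fundamentalDomain_measurableSet b'
  have hfd := ZSpan.isAddFundamentalDomain' b' (volume : Measure (EuclideanSpace ℝ (Fin n)))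
  -- volume of the fundamental domain is at most 1
  let b₀ := (EuclideanSpace.basisFun (Fin n) ℝ).toBasis
  have h1 : volume (ZSpan.fundamentalDomain b₀) = 1 := by
    rw [measure_congr (ZSpan.fundamentalDomain_ae_parallelepiped b₀ volume)]
    have := (EuclideanSpace.basisFun (Fin n) ℝ).volume_parallelepiped
    rwa [← OrthonormalBasis.coe_toBasis] at this
  have h2 : b₀.det ⇑b' = (Matrix.of (fun i j : Fin n => b j i)).det := by
    rw [Module.Basis.det_apply]
    congr 1
    ext i j
    rw [Module.Basis.toMatrix_apply, hb']
    simp [b₀, EuclideanSpace.basisFun_repr]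
  have hvolF : volume F ≤ 1 := by
    rw [hF, ZSpan.measure_fundamentalDomain b' volume b₀, h1, h2, mul_one]
    exact ENNReal.ofReal_le_one.mpr hdet
  -- the half-size ball
  set S := Metric.closedBall (0 : EuclideanSpace ℝ (Fin n)) (r/2) with hS
  have hA : ∀ g : L, (g +ᵥ S : Set (EuclideanSpace ℝ (Fin n)))
      = Metric.closedBall (g : EuclideanSpace ℝ (Fin n)) (r/2) := by
    intro g
    ext x
    constructor
    · rintro ⟨s, hs, rfl⟩
      rw [Metric.mem_closedBall] at hs ⊢
      simp only [AddSubgroup.vadd_def, vadd_eq_add]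
      simpa [dist_eq_norm] using hs
    · intro hx
      refine ⟨x - g, ?_, ?_⟩
      · rw [Metric.mem_closedBall] at hx ⊢
        simpa [dist_eq_norm] using hx
      · simp only [AddSubgroup.vadd_def, vadd_eq_add]
        abel
  let A : L → Set (EuclideanSpace ℝ (Fin n)) := fun g => (g +ᵥ S) ∩ F
  have hAmeas : ∀ g : L, MeasurableSet (A g) := by
    intro g
    exact ((hA g) ▸ measurableSet_closedBall).inter hFmeas
  have hmeq : volume S = ∑' g : L, volume (A g) := hfd.measure_eq_tsum S
  -- pointwise multiplicity bound
  have key : ∀ x : EuclideanSpace ℝ (Fin n),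
      (∑' g : L, (A g).indicator (1 : EuclideanSpace ℝ (Fin n) → ENNReal) x)
      ≤ F.indicator (fun _ => (N : ENNReal)) x := by
    intro x
    by_cases hxF : x ∈ F
    · rw [Set.indicator_of_mem hxF]
      set P : Set L := {g : L | x ∈ A g} with hP
      have hind : ∀ g : L, (A g).indicator (1 : EuclideanSpace ℝ (Fin n) → ENNReal) x
          = P.indicator (fun _ => (1 : ENNReal)) g := by
        intro g
        by_cases hg : x ∈ A g
        · rw [Set.indicator_of_mem hg, Set.indicator_of_mem (show g ∈ P from hg)]
          rfl
        · rw [Set.indicator_of_notMem hg, Set.indicator_of_notMem (show g ∉ P from hg)]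
      rcases P.eq_empty_or_nonempty with hPe | ⟨g₀, hg₀⟩
      · rw [tsum_congr hind]
        simp [hPe]
      · have hdist : ∀ g : L, g ∈ P → ‖x - (g : EuclideanSpace ℝ (Fin n))‖ ≤ r / 2 := by
          intro g hg
          have := hg.1
          rw [hA g, Metric.mem_closedBall, dist_eq_norm] at this
          exact this
        have hmem : ∀ g ∈ P, (g : EuclideanSpace ℝ (Fin n)) - (g₀ : EuclideanSpace ℝ (Fin n))
            ∈ Λ ∩ Metric.closedBall 0 r := by
          intro g hg
          constructor
          · rw [hΛL]
            exact Submodule.sub_mem _ g.2 g₀.2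
          · rw [Metric.mem_closedBall, dist_zero_right]
            have h3 : (g : EuclideanSpace ℝ (Fin n)) - (g₀ : EuclideanSpace ℝ (Fin n))
                = (x - g₀) - (x - g) := by abel
            rw [h3]
            calc ‖(x - (g₀ : EuclideanSpace ℝ (Fin n))) - (x - (g : EuclideanSpace ℝ (Fin n)))‖
                ≤ ‖x - (g₀ : EuclideanSpace ℝ (Fin n))‖
                  + ‖x - (g : EuclideanSpace ℝ (Fin n))‖ := norm_sub_le _ _
              _ ≤ r/2 + r/2 := add_le_add (hdist g₀ hg₀) (hdist g hg)
              _ = r := by ring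
        have hinj : Set.InjOn (fun g : L => (g : EuclideanSpace ℝ (Fin n))
            - (g₀ : EuclideanSpace ℝ (Fin n))) P := by
          intro a _ c _ h
          exact Subtype.ext (sub_left_injective h)
        have hPfin : P.Finite := by
          refine Set.Finite.of_finite_image ?_ hinj
          exact hTfin.subset (by rintro _ ⟨g, hg, rfl⟩; exact hmem g hg)
        have hcard : P.ncard ≤ N := by
          calc P.ncard = ((fun g : L => (g : EuclideanSpace ℝ (Fin n))
                - (g₀ : EuclideanSpace ℝ (Fin n))) '' P).ncard :=
                (Set.ncard_image_of_injOn hinj).symm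
            _ ≤ N := Set.ncard_le_ncard (by rintro _ ⟨g, hg, rfl⟩; exact hmem g hg) hTfin
        rw [tsum_congr hind]
        rw [tsum_eq_sum (s := hPfin.toFinset)
          (fun g hg => Set.indicator_of_notMem (by simpa using hg) _)]
        calc ∑ g ∈ hPfin.toFinset, P.indicator (fun _ => (1 : ENNReal)) g
            = ∑ g ∈ hPfin.toFinset, 1 := by
              refine Finset.sum_congr rfl fun g hg => ?_
              exact Set.indicator_of_mem (hPfin.mem_toFinset.mp hg) _
          _ = (P.ncard : ENNReal) := by
              rw [Finset.sum_const, nsmul_eq_mul, mul_one,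
                Set.ncard_eq_toFinset_card P hPfin]
          _ ≤ (N : ENNReal) := by exact_mod_cast Nat.cast_le.mpr hcard
    · rw [Set.indicator_of_notMem hxF]
      have hz : ∀ g : L, (A g).indicator (1 : EuclideanSpace ℝ (Fin n) → ENNReal) x = 0 :=
        fun g => Set.indicator_of_notMem (fun h => hxF h.2) _
      simp [hz]
  -- volume of S is at most N
  have hSN : volume S ≤ (N : ENNReal) := by
    calc volume S = ∑' g : L, volume (A g) := hmeq
      _ = ∑' g : L, ∫⁻ x, (A g).indicator (1 : EuclideanSpace ℝ (Fin n) → ENNReal) x := by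
          refine tsum_congr fun g => ?_
          rw [lintegral_indicator_one (hAmeas g)]
      _ = ∫⁻ x, ∑' g : L, (A g).indicator (1 : EuclideanSpace ℝ (Fin n) → ENNReal) x := by
          rw [lintegral_tsum fun g => (measurable_one.indicator (hAmeas g)).aemeasurable]
      _ ≤ ∫⁻ x, F.indicator (fun _ => (N : ENNReal)) x := lintegral_mono key
      _ = (N : ENNReal) * volume F := by rw [lintegral_indicator_const hFmeas]
      _ ≤ (N : ENNReal) * 1 := mul_le_mul_right hvolF _
      _ = (N : ENNReal) := mul_one _
  -- volume computation
  have hrank : Module.finrank ℝ (EuclideanSpace ℝ (Fin n)) = n := finrank_euclideanSpace_fin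
  have hvS : (volume S).toReal
      = (2 : ℝ)⁻¹ ^ n
        * (volume (Metric.closedBall (0 : EuclideanSpace ℝ (Fin n)) r)).toReal := by
    rw [hS, Measure.addHaar_closedBall _ _ (by positivity : (0:ℝ) ≤ r/2),
      Measure.addHaar_closedBall _ _ hr.le, hrank, ENNReal.toReal_mul, ENNReal.toReal_mul,
      ENNReal.toReal_ofReal (by positivity), ENNReal.toReal_ofReal (by positivity)]
    rw [div_pow]
    simp only [div_eq_mul_inv, inv_pow, one_mul]
    ring
  calc (2 : ℝ)⁻¹ ^ n * (volume (Metric.closedBall (0 : EuclideanSpace ℝ (Fin n)) r)).toReal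
      = (volume S).toReal := hvS.symm
    _ ≤ ((N : ENNReal)).toReal := ENNReal.toReal_mono (by simp) hSN
    _ = (N : ℝ) := by simp
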